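/- Let Λ ⊂ F_N be a nonempty admissible finite set and let U, Y be complex vector spaces (or Hilbert spaces). Suppose a noncommutative polynomial p(z) = ∑_{w∈Λ} p_w z^w with coefficients p_w ∈ L(U,Y) satisfies p(T) := ∑_{w∈Λ} p_w ⊗ T^w = 0 for every N-tuple T of Λ-jointly nilpotent contractive n×n matrices, for n = #Λ. Then p_w = 0 for all w ∈ Λ. -/

import Mathlib

open scoped TensorProduct
open FreeMonoid

attribute [local instance 0] Classical.propDecidable

namespace Stmt12Aux

variable {N : ℕ} (Λ : Finset (FreeMonoid (Fin N)))

/-- word of index -/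
noncomputable def wrd (j : Fin Λ.card) : FreeMonoid (Fin N) := (Λ.equivFin.symm j : _)

lemma wrd_mem (j : Fin Λ.card) : wrd Λ j ∈ Λ := (Λ.equivFin.symm j).2

/-- index of word -/
noncomputable def idx (w : FreeMonoid (Fin N)) (h : w ∈ Λ) : Fin Λ.card :=
  Λ.equivFin ⟨w, h⟩

@[simp] lemma wrd_idx (w : FreeMonoid (Fin N)) (h : w ∈ Λ) : wrd Λ (idx Λ w h) = w := by
  simp [wrd, idx]

lemma wrd_injective : Function.Injective (wrd Λ) := by
  intro i j h
  have := congrArg Λ.equivFin (Subtype.ext h : Λ.equivFin.symm i = Λ.equivFin.symm j)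
  simpa using this

lemma idx_wrd (j : Fin Λ.card) : idx Λ (wrd Λ j) (wrd_mem Λ j) = j := by
  apply wrd_injective Λ; simp

/-- partial inverse of "prepend letter k" on indices -/
noncomputable def g (k : Fin N) (j : Fin Λ.card) : Option (Fin Λ.card) :=
  if h : ∃ i, wrd Λ j = FreeMonoid.of k * wrd Λ i then some h.choose else none

lemma g_some_iff {k : Fin N} {j i : Fin Λ.card} :
    g Λ k j = some i ↔ wrd Λ j = FreeMonoid.of k * wrd Λ i := by
  unfold g
  split_ifs with h
  · constructor
    · rintro hs
      have := h.choose_spec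
      rwa [Option.some_inj.mp hs] at this
    · intro hw
      have hs := h.choose_spec
      have : wrd Λ h.choose = wrd Λ i := mul_left_cancel (hs.symm.trans hw)
      exact congrArg some (wrd_injective Λ this)
  · simp only [false_iff, reduceCtorEq]
    intro hw; exact h ⟨i, hw⟩

/-- the shift map, as a linear map -/
noncomputable def S (k : Fin N) :
    EuclideanSpace ℂ (Fin Λ.card) →ₗ[ℂ] EuclideanSpace ℂ (Fin Λ.card) where
  toFun x := WithLp.toLp 2 (fun j => ((g Λ k j).map x).getD 0)
  map_add' x y := by
    refine PiLp.ext (fun j => ?_)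
    show ((g Λ k j).map (x + y)).getD 0 = ((g Λ k j).map x).getD 0 + ((g Λ k j).map y).getD 0
    cases g Λ k j <;> simp [PiLp.add_apply]
  map_smul' c x := by
    refine PiLp.ext (fun j => ?_)
    show ((g Λ k j).map (c • x)).getD 0 = c • ((g Λ k j).map x).getD 0
    cases g Λ k j <;> simp [PiLp.smul_apply]

lemma S_apply (k : Fin N) (x : EuclideanSpace ℂ (Fin Λ.card)) (j : Fin Λ.card) :
    S Λ k x j = ((g Λ k j).map x).getD 0 := rfl

lemma S_norm_le (k : Fin N) (x : EuclideanSpace ℂ (Fin Λ.card)) :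
    ‖S Λ k x‖ ≤ ‖x‖ := by
  classical
  rw [EuclideanSpace.norm_eq, EuclideanSpace.norm_eq]
  apply Real.sqrt_le_sqrt
  set s : Finset (Fin Λ.card) := Finset.univ.filter (fun j => (g Λ k j).isSome) with hs
  set e : Fin Λ.card → Fin Λ.card := fun j => (g Λ k j).getD j with he
  have hge : ∀ j ∈ s, g Λ k j = some (e j) := by
    intro j hj
    have : (g Λ k j).isSome := (Finset.mem_filter.mp hj).2
    obtain ⟨i, hi⟩ := Option.isSome_iff_exists.mp this
    simp [he, hi]
  have hinj : Set.InjOn e s := by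
    intro j₁ h₁ j₂ h₂ hee
    have e₁ := (g_some_iff Λ).mp (hge j₁ h₁)
    have e₂ := (g_some_iff Λ).mp (hge j₂ h₂)
    rw [hee] at e₁
    exact wrd_injective Λ (e₁.trans e₂.symm)
  calc ∑ j, ‖S Λ k x j‖ ^ 2
      = ∑ j ∈ s, ‖S Λ k x j‖ ^ 2 := by
        rw [Finset.sum_filter_of_ne]
        intro j _ hne
        by_contra hnone
        apply hne
        have h0 : g Λ k j = none := Option.not_isSome_iff_eq_none.mp hnone
        rw [S_apply, h0]
        simp
    _ = ∑ j ∈ s, ‖x (e j)‖ ^ 2 := by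
        refine Finset.sum_congr rfl (fun j hj => ?_)
        rw [S_apply, hge j hj]
        rfl
    _ = ∑ i ∈ s.image e, ‖x i‖ ^ 2 := by
        rw [Finset.sum_image fun a ha b hb => hinj ha hb]
    _ ≤ ∑ i, ‖x i‖ ^ 2 := by
        refine Finset.sum_le_sum_of_subset_of_nonneg (Finset.subset_univ _) ?_
        intros; positivity

lemma dite_single_congr {w w' : FreeMonoid (Fin N)} (hww : w = w') :
    (if h : w ∈ Λ then EuclideanSpace.single (idx Λ w h) (1 : ℂ) else 0) =
    (if h : w' ∈ Λ then EuclideanSpace.single (idx Λ w' h) (1 : ℂ) else 0) := by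
  subst hww; rfl

lemma S_single (k : Fin N) (j : Fin Λ.card) :
    S Λ k (EuclideanSpace.single j (1 : ℂ)) =
      (if h : FreeMonoid.of k * wrd Λ j ∈ Λ
        then EuclideanSpace.single (idx Λ _ h) (1 : ℂ) else 0) := by
  classical
  refine PiLp.ext (fun j' => ?_)
  rw [S_apply]
  split_ifs with h
  · rcases hg : g Λ k j' with _ | i
    · have hne : j' ≠ idx Λ _ h := by
        intro hj
        have : g Λ k j' = some j := by
          rw [g_some_iff, hj, wrd_idx]
        rw [hg] at this; exact nomatch this
      simp [EuclideanSpace.single_apply, hne]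
    · have hwj : wrd Λ j' = FreeMonoid.of k * wrd Λ i := (g_some_iff Λ).mp hg
      have hiff : i = j ↔ j' = idx Λ _ h := by
        constructor
        · intro hij
          apply wrd_injective Λ
          rw [wrd_idx, ← hij, hwj]
        · intro hj
          apply wrd_injective Λ
          apply mul_left_cancel (a := FreeMonoid.of k)
          rw [← hwj, hj, wrd_idx]
      simp only [Option.map_some, Option.getD_some, EuclideanSpace.single_apply]
      by_cases hc : i = j
      · rw [if_pos hc, if_pos (hiff.mp hc)]
      · rw [if_neg hc, if_neg (fun hj => hc (hiff.mpr hj))]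
  · rcases hg : g Λ k j' with _ | i
    · rfl
    · have hwj : wrd Λ j' = FreeMonoid.of k * wrd Λ i := (g_some_iff Λ).mp hg
      have hne : i ≠ j := by
        intro hij
        apply h
        rw [← hij, ← hwj]
        exact wrd_mem Λ j'
      simp [EuclideanSpace.single_apply, hne]

variable (hadm : ∀ w ∉ Λ, ∀ k : Fin N,
      FreeMonoid.of k * w ∉ Λ ∧ w * FreeMonoid.of k ∉ Λ)

include hadm

lemma mul_not_mem (u : FreeMonoid (Fin N)) : ∀ v ∉ Λ, v * u ∉ Λ := by
  induction u using FreeMonoid.recOn with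
  | one => intro v hv; simpa using hv
  | of_mul a u ih =>
    intro v hv
    rw [← mul_assoc]
    exact ih (v * FreeMonoid.of a) (hadm v hv a).2

lemma lift_single (v : FreeMonoid (Fin N)) (j : Fin Λ.card) :
    FreeMonoid.lift (fun k => S Λ k) v (EuclideanSpace.single j (1 : ℂ)) =
      (if h : v * wrd Λ j ∈ Λ
        then EuclideanSpace.single (idx Λ _ h) (1 : ℂ) else 0) := by
  induction v using FreeMonoid.recOn with
  | one =>
    have hmem : (1 : FreeMonoid (Fin N)) * wrd Λ j ∈ Λ := by
      rw [one_mul]; exact wrd_mem Λ j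
    rw [dif_pos hmem, map_one]
    show EuclideanSpace.single j (1 : ℂ) = _
    have hj : idx Λ (1 * wrd Λ j) hmem = j := by
      apply wrd_injective Λ
      rw [wrd_idx, one_mul]
    rw [hj]
  | of_mul a v ih =>
    rw [map_mul, FreeMonoid.lift_eval_of]
    show S Λ a (FreeMonoid.lift (fun k => S Λ k) v (EuclideanSpace.single j (1 : ℂ))) = _
    rw [ih]
    by_cases h : v * wrd Λ j ∈ Λ
    · rw [dif_pos h, S_single]
      apply dite_single_congr
      rw [wrd_idx, mul_assoc]
    · rw [dif_neg h, map_zero, dif_neg]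
      rw [mul_assoc]
      exact (hadm _ h a).1

lemma lift_zero (v : FreeMonoid (Fin N)) (hv : v ∉ Λ) :
    FreeMonoid.lift (fun k => S Λ k) v = 0 := by
  apply Module.Basis.ext (EuclideanSpace.basisFun (Fin Λ.card) ℂ).toBasis
  intro j
  rw [OrthonormalBasis.coe_toBasis, EuclideanSpace.basisFun_apply, lift_single Λ hadm]
  rw [dif_neg (mul_not_mem Λ hadm (wrd Λ j) v hv)]
  rfl

variable (hne : Λ.Nonempty)
include hne

lemma one_mem : (1 : FreeMonoid (Fin N)) ∈ Λ := by
  obtain ⟨w, hw⟩ := hne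
  induction w using FreeMonoid.recOn with
  | one => exact hw
  | of_mul a w ih =>
    apply ih
    by_contra h
    exact (hadm w h a).1 hw

end Stmt12Aux

open Stmt12Aux in
theorem stmt12 {N : ℕ} (Λ : Finset (FreeMonoid (Fin N)))
    (hadm : ∀ w ∉ Λ, ∀ k : Fin N,
      FreeMonoid.of k * w ∉ Λ ∧ w * FreeMonoid.of k ∉ Λ)
    (hne : Λ.Nonempty)
    {U Y : Type*} [AddCommGroup U] [Module ℂ U] [AddCommGroup Y] [Module ℂ Y]
    (p : FreeMonoid (Fin N) → (U →ₗ[ℂ] Y))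
    (hp : ∀ T : Fin N →
        (EuclideanSpace ℂ (Fin Λ.card) →L[ℂ] EuclideanSpace ℂ (Fin Λ.card)),
      (∀ k, ‖T k‖ ≤ 1) →
      (∀ v ∉ Λ, FreeMonoid.lift (fun k => (T k).toLinearMap) v = 0) →
      ∑ w ∈ Λ, TensorProduct.map (p w)
        (FreeMonoid.lift (fun k => (T k).toLinearMap) w) = 0) :
    ∀ w ∈ Λ, p w = 0 := by
  classical
  intro w₀ hw₀
  ext u
  set T : Fin N → (EuclideanSpace ℂ (Fin Λ.card) →L[ℂ] EuclideanSpace ℂ (Fin Λ.card)) :=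
    fun k => LinearMap.toContinuousLinearMap (S Λ k) with hT
  have hTlin : (fun k => (T k).toLinearMap) = fun k => S Λ k := by
    funext k; ext x; rfl
  have hT1 : ∀ k, ‖T k‖ ≤ 1 := by
    intro k
    apply ContinuousLinearMap.opNorm_le_bound _ zero_le_one
    intro x
    rw [one_mul]
    exact S_norm_le Λ k x
  have hnil : ∀ v ∉ Λ, FreeMonoid.lift (fun k => (T k).toLinearMap) v = 0 := by
    intro v hv
    rw [hTlin]
    exact lift_zero Λ hadm v hv
  have hsum := hp T hT1 hnil
  rw [hTlin] at hsum
  -- evaluate at u ⊗ e_{j₀} where j₀ is the index of the empty word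
  set j₀ : Fin Λ.card := idx Λ 1 (one_mem Λ hadm hne) with hj₀
  have h2 := congrArg (fun F => F (u ⊗ₜ[ℂ] EuclideanSpace.single j₀ (1 : ℂ))) hsum
  simp only [LinearMap.coe_sum, Finset.sum_apply, TensorProduct.map_tmul,
    LinearMap.zero_apply] at h2
  have h3 : ∑ w ∈ Λ, (p w u) ⊗ₜ[ℂ]
      (if h : w ∈ Λ then EuclideanSpace.single (idx Λ w h) (1 : ℂ) else 0) = 0 := by
    rw [← h2]
    refine Finset.sum_congr rfl (fun w hw => ?_)
    congr 1
    rw [lift_single Λ hadm]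
    apply dite_single_congr
    rw [hj₀, wrd_idx, mul_one]
  -- apply the coordinate functional at idx w₀
  set B : Y →ₗ[ℂ] (EuclideanSpace ℂ (Fin Λ.card)) →ₗ[ℂ] Y :=
    LinearMap.mk₂ ℂ (fun y x => x (idx Λ w₀ hw₀) • y)
      (fun y₁ y₂ x => smul_add _ y₁ y₂)
      (fun c y x => smul_comm _ c y)
      (fun y x₁ x₂ => add_smul (x₁ _) (x₂ _) y)
      (fun c y x => smul_assoc c (x _) y) with hB
  have h4 := congrArg (TensorProduct.lift B) h3
  rw [map_sum, map_zero] at h4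
  have h5 : ∀ w ∈ Λ, TensorProduct.lift B ((p w u) ⊗ₜ[ℂ]
      (if h : w ∈ Λ then EuclideanSpace.single (idx Λ w h) (1 : ℂ) else 0)) =
      (if w = w₀ then p w u else 0) := by
    intro w hw
    rw [dif_pos hw, TensorProduct.lift.tmul]
    show (EuclideanSpace.single (idx Λ w hw) (1 : ℂ)) (idx Λ w₀ hw₀) • (p w u) = _
    rw [EuclideanSpace.single_apply]
    by_cases hww : w = w₀
    · subst hww
      rw [if_pos rfl, if_pos rfl, one_smul]
    · rw [if_neg, if_neg hww, zero_smul]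
      intro hidx
      apply hww
      have := congrArg (wrd Λ) hidx
      rw [wrd_idx, wrd_idx] at this
      exact this.symm
  rw [Finset.sum_congr rfl h5,
    Finset.sum_eq_single_of_mem w₀ hw₀ (fun w _ hwne => if_neg hwne), if_pos rfl] at h4
  exact h4
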